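/- Let X′ be a finite indecomposable braided rack and let X be a proper subrack of X′ which is itself indecomposable. Then for all x ∈ X and all x′ ∈ X′ one has #{z ∈ X : x ▷ z ≠ z} < #{z ∈ X′ : x′ ▷ z ≠ z}; that is, k₃(X) < k₃(X′). -/

import Mathlib

structure Rack' (X : Type*) where
  act : X → X → X
  act_bijective : ∀ x, Function.Bijective (act x)
  self_distrib : ∀ x y z, act x (act y z) = act (act x y) (act x z)

namespace Rack'

variable {X : Type*} (R : Rack' X)

/-- The left translation `φ_x : y ↦ x ▷ y` as a permutation of `X`. -/
noncomputable def phi (x : X) : Equiv.Perm X :=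
  Equiv.ofBijective (R.act x) (R.act_bijective x)

@[simp] theorem phi_apply (x y : X) : R.phi x y = R.act x y := rfl

/-- A quandle is a rack with `x ▷ x = x`. -/
def IsQuandle : Prop := ∀ x, R.act x x = x

/-- A rack is braided if it is a quandle and for all `x, y` at least one of
`x ▷ (y ▷ x) = y` and `x ▷ y = y` holds. -/
def IsBraided : Prop :=
  R.IsQuandle ∧ ∀ x y, R.act x (R.act y x) = y ∨ R.act x y = y

/-- The inner group of a rack: the subgroup of the symmetric group generated by all
left translations. -/
def innerGroup : Subgroup (Equiv.Perm X) :=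
  Subgroup.closure (Set.range fun x => R.phi x)

/-- A rack is indecomposable if its inner group acts transitively. -/
def IsIndecomposable : Prop := ∀ x y : X, ∃ g ∈ R.innerGroup, g x = y

/-- A subrack: a nonempty subset closed under the operation which is itself a rack
under the restricted operation. -/
def IsSubrack (Y : Set X) : Prop :=
  Y.Nonempty ∧ (∀ x ∈ Y, ∀ y ∈ Y, R.act x y ∈ Y) ∧
    ∀ x ∈ Y, ∀ y ∈ Y, ∃ z ∈ Y, R.act x z = y

/-- The first Hurwitz braid `σ₁(x,y,z) = (x ▷ y, x, z)`. -/
noncomputable def sigma1 : Equiv.Perm (X × X × X) :=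
  Equiv.ofBijective (fun p => (R.act p.1 p.2.1, p.1, p.2.2)) (by
    constructor
    · rintro ⟨a, b, c⟩ ⟨a', b', c'⟩ h
      simp only [Prod.mk.injEq] at h
      obtain ⟨h1, rfl, rfl⟩ := h
      obtain rfl := (R.act_bijective a).1 h1
      rfl
    · rintro ⟨u, v, w⟩
      refine ⟨(v, (R.phi v).symm u, w), ?_⟩
      have h : R.act v ((R.phi v).symm u) = u := (R.phi v).apply_symm_apply u
      simp [h])

/-- The second Hurwitz braid `σ₂(x,y,z) = (x, y ▷ z, y)`. -/
noncomputable def sigma2 : Equiv.Perm (X × X × X) :=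
  Equiv.ofBijective (fun p => (p.1, R.act p.2.1 p.2.2, p.2.1)) (by
    constructor
    · rintro ⟨a, b, c⟩ ⟨a', b', c'⟩ h
      simp only [Prod.mk.injEq] at h
      obtain ⟨rfl, h1, rfl⟩ := h
      obtain rfl := (R.act_bijective b).1 h1
      rfl
    · rintro ⟨u, v, w⟩
      refine ⟨(u, w, (R.phi w).symm v), ?_⟩
      have h : R.act w ((R.phi w).symm v) = v := (R.phi w).apply_symm_apply v
      simp [h])

/-- The subgroup of the symmetric group of `X³` generated by the two Hurwitz braids. -/
def hurwitzGroup : Subgroup (Equiv.Perm (X × X × X)) :=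
  Subgroup.closure {R.sigma1, R.sigma2}

/-- The Hurwitz orbit of a triple. -/
def hurwitzOrbit (p : X × X × X) : Set (X × X × X) :=
  {q | ∃ g ∈ R.hurwitzGroup, g p = q}

/-- A subset of `X³` is a Hurwitz orbit if it is the Hurwitz orbit of some triple. -/
def IsHurwitzOrbit (O : Set (X × X × X)) : Prop := ∃ p, O = R.hurwitzOrbit p

/-- A quarantine of a Hurwitz orbit `O`: a nonempty subset `Q ⊆ O` such that for every
triple `(x,y,z) ∈ O`, if two of `(x,y,z)`, `(x, y▷z, y)`, `(x▷(y▷z), x, y)` lie in `Q`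
then so does the third. -/
def IsQuarantine (O Q : Set (X × X × X)) : Prop :=
  Q.Nonempty ∧ Q ⊆ O ∧ ∀ p ∈ O,
    ((p ∈ Q ∧ R.sigma2 p ∈ Q) → R.sigma1 (R.sigma2 p) ∈ Q) ∧
    ((p ∈ Q ∧ R.sigma1 (R.sigma2 p) ∈ Q) → R.sigma2 p ∈ Q) ∧
    ((R.sigma2 p ∈ Q ∧ R.sigma1 (R.sigma2 p) ∈ Q) → p ∈ Q)

/-- A plague of a Hurwitz orbit `O`: a subset `P ⊆ O` whose smallest containing
quarantine is `O` itself. -/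
def IsPlague (O P : Set (X × X × X)) : Prop :=
  P.Nonempty ∧ P ⊆ O ∧ ∀ Q, R.IsQuarantine O Q → P ⊆ Q → Q = O

/-- Two racks are isomorphic if there is a bijection respecting the operations. -/
def IsIsomorphic {Y : Type*} (S : Rack' Y) : Prop :=
  ∃ f : X ≃ Y, ∀ a b, f (R.act a b) = S.act (f a) (f b)

end Rack'

section AuxK3

variable {X : Type*} (R : Rack' X)

lemma Rack'.phi_conj (a b : X) :
    R.phi (R.act a b) = R.phi a * R.phi b * (R.phi a)⁻¹ := by
  ext w
  have h : R.phi a ((R.phi a)⁻¹ w) = w := Equiv.apply_symm_apply _ _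
  simp only [Equiv.Perm.mul_apply, Rack'.phi_apply] at h ⊢
  conv_lhs => rw [← h]
  rw [← R.self_distrib]

lemma Rack'.inn_conj : ∀ g ∈ R.innerGroup, ∀ b, R.phi (g b) = g * R.phi b * g⁻¹ := by
  intro g hg
  induction hg using Subgroup.closure_induction with
  | mem x hx =>
    obtain ⟨a, rfl⟩ := hx
    intro b
    simpa using R.phi_conj a b
  | one => intro b; simp
  | mul u v hu hv ihu ihv =>
    intro b
    simp only [Equiv.Perm.mul_apply]
    rw [ihu, ihv]
    group
  | inv u hu ihu =>
    intro b
    have := ihu (u⁻¹ b)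
    rw [show u (u⁻¹ b) = b from Equiv.apply_symm_apply u b] at this
    rw [this]
    group

lemma Rack'.moved_apply (g : Equiv.Perm X) (hg : g ∈ R.innerGroup) (b : X) :
    {z | R.act (g b) z ≠ z} = g '' {z | R.act b z ≠ z} := by
  have h := R.inn_conj g hg b
  ext z
  constructor
  · intro hz
    refine ⟨g⁻¹ z, ?_, Equiv.apply_symm_apply _ _⟩
    intro hfix
    apply hz
    have : R.phi (g b) z = (g * R.phi b * g⁻¹) z := by rw [h]
    simp only [Equiv.Perm.mul_apply, Rack'.phi_apply] at this
    rw [this, hfix, show g (g⁻¹ z) = z from Equiv.apply_symm_apply g z]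
  · rintro ⟨w, hw, rfl⟩
    intro hfix
    apply hw
    have : R.phi (g b) (g w) = (g * R.phi b * g⁻¹) (g w) := by rw [h]
    simp only [Equiv.Perm.mul_apply, Equiv.Perm.coe_inv, Equiv.symm_apply_apply, Rack'.phi_apply] at this
    rw [this] at hfix
    exact g.injective hfix

lemma Rack'.ncard_moved_eq (hInd : R.IsIndecomposable) (b c : X) :
    {z | R.act b z ≠ z}.ncard = {z | R.act c z ≠ z}.ncard := by
  obtain ⟨g, hg, rfl⟩ := hInd b c
  rw [R.moved_apply g hg b, Set.ncard_image_of_injective _ g.injective]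

lemma Rack'.braided_symm (hB : R.IsBraided) {u v : X} (h : R.act u v = v) :
    R.act v u = u := by
  rcases hB.2 v u with h1 | h1
  · rw [h, hB.1 v] at h1
    rw [← h1, hB.1]
  · exact h1

end AuxK3

/-- If `X` is a proper subrack (here: the image of a non-surjective injective rack
morphism) of a finite indecomposable braided rack `X'`, and `X` is itself
indecomposable, then `k₃(X) < k₃(X')`: for all `x ∈ X` and `x' ∈ X'`,
`#{z ∈ X : x ▷ z ≠ z} < #{z ∈ X' : x' ▷ z ≠ z}`. -/
theorem k3_lt_of_proper_subrack {X X' : Type*} [Finite X] [Finite X']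
    (R : Rack' X) (R' : Rack' X')
    (hR' : R'.IsBraided) (hInd' : R'.IsIndecomposable) (hInd : R.IsIndecomposable)
    (ι : X → X') (hι : Function.Injective ι)
    (hmor : ∀ a b : X, ι (R.act a b) = R'.act (ι a) (ι b))
    (hproper : ¬Function.Surjective ι)
    (x : X) (x' : X') :
    {z : X | R.act x z ≠ z}.ncard < {z : X' | R'.act x' z ≠ z}.ncard := by
  classical
  set S : Set X' := Set.range ι with hS
  -- membership in S is preserved and reflected by acting by elements of S
  have memS : ∀ (a : X) (z : X'), z ∈ S ↔ R'.act (ι a) z ∈ S := by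
    intro a z
    constructor
    · rintro ⟨b, rfl⟩
      exact ⟨R.act a b, hmor a b⟩
    · rintro ⟨b, hb⟩
      obtain ⟨c, rfl⟩ := (R.act_bijective a).2 b
      rw [hmor] at hb
      exact ⟨c, (R'.act_bijective (ι a)).1 hb⟩
  have key : {z : X' | R'.act x' z ≠ z}.ncard
      = {z : X' | R'.act (ι x) z ≠ z}.ncard := R'.ncard_moved_eq hInd' x' (ι x)
  rw [key]
  have hιM : ι '' {z : X | R.act x z ≠ z} ⊆ {z : X' | R'.act (ι x) z ≠ z} := by
    rintro _ ⟨z, hz, rfl⟩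
    simp only [Set.mem_setOf_eq] at hz ⊢
    rw [← hmor]
    exact fun h => hz (hι h)
  by_cases hcase : ∃ z' : X', z' ∉ S ∧ R'.act (ι x) z' ≠ z'
  · obtain ⟨z', hz'S, hz'⟩ := hcase
    have hsub : insert z' (ι '' {z : X | R.act x z ≠ z})
        ⊆ {z : X' | R'.act (ι x) z ≠ z} := by
      rw [Set.insert_subset_iff]
      exact ⟨hz', hιM⟩
    have hfin : ({z : X' | R'.act (ι x) z ≠ z}).Finite := Set.toFinite _
    have h1 : (insert z' (ι '' {z : X | R.act x z ≠ z})).ncard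
        ≤ {z : X' | R'.act (ι x) z ≠ z}.ncard := Set.ncard_le_ncard hsub hfin
    have hz'ni : z' ∉ ι '' {z : X | R.act x z ≠ z} := by
      intro ⟨w, _, hw⟩
      exact hz'S ⟨w, hw⟩
    rw [Set.ncard_insert_of_notMem hz'ni (Set.toFinite _),
      Set.ncard_image_of_injective _ hι] at h1
    omega
  · -- the moved points of ι x all lie in S; derive a contradiction
    exfalso
    push_neg at hcase
    -- G : elements of X whose image translation fixes the complement of S pointwise
    set G : Set X := {y | ∀ z' : X', z' ∉ S → R'.act (ι y) z' = z'} with hG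
    have hxG : x ∈ G := fun z' hz' => hcase z' hz'
    have hGiff : ∀ a y : X, y ∈ G ↔ R.act a y ∈ G := by
      intro a y
      constructor
      · intro hy z' hz'
        obtain ⟨v, rfl⟩ := (R'.act_bijective (ι a)).2 z'
        have hvS : v ∉ S := fun hvmem => hz' ((memS a v).1 hvmem)
        rw [hmor, ← R'.self_distrib, hy v hvS]
      · intro hy z' hz'
        have hwS : R'.act (ι a) z' ∉ S := fun hwmem => hz' ((memS a z').2 hwmem)
        have h2 := hy _ hwS
        have h3 : R'.act (ι (R.act a y)) (R'.act (ι a) z')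
            = R'.act (ι a) (R'.act (ι y) z') := by
          rw [hmor, ← R'.self_distrib]
        rw [h3] at h2
        exact (R'.act_bijective (ι a)).1 h2
    have hGinv : ∀ g ∈ R.innerGroup, ∀ y : X, y ∈ G ↔ g y ∈ G := by
      intro g hg
      induction hg using Subgroup.closure_induction with
      | mem p hp =>
        obtain ⟨a, rfl⟩ := hp
        intro y
        simpa using hGiff a y
      | one => intro y; simp
      | mul u v hu hv ihu ihv =>
        intro y
        rw [ihv y, Equiv.Perm.mul_apply]
        exact ihu (v y)
      | inv u hu ihu =>
        intro y
        have := ihu (u⁻¹ y)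
        rw [show u (u⁻¹ y) = y from Equiv.apply_symm_apply u y] at this
        exact this.symm
    have hallG : ∀ y : X, y ∈ G := by
      intro y
      obtain ⟨g, hg, hgx⟩ := hInd x y
      exact hgx ▸ (hGinv g hg x).1 hxG
    -- every element outside S fixes every element of S
    have hfixS : ∀ z' : X', z' ∉ S → ∀ s ∈ S, R'.act z' s = s := by
      rintro z' hz' _ ⟨y, rfl⟩
      exact R'.braided_symm hR' (hallG y z' hz')
    -- S is invariant under the inner group of X'
    have hSinv : ∀ g ∈ R'.innerGroup, ∀ z : X', z ∈ S ↔ g z ∈ S := by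
      intro g hg
      induction hg using Subgroup.closure_induction with
      | mem p hp =>
        obtain ⟨u, rfl⟩ := hp
        intro z
        simp only [Rack'.phi_apply]
        by_cases hu : u ∈ S
        · obtain ⟨a, rfl⟩ := hu
          exact memS a z
        · constructor
          · intro hz
            rw [hfixS u hu z hz]
            exact hz
          · intro hz
            have h2 := hfixS u hu _ hz
            have h3 : R'.act u z = z := (R'.act_bijective u).1 h2
            rw [← h3]; exact hz
      | one => intro z; simp
      | mul u v hu hv ihu ihv =>
        intro z
        rw [ihv z, Equiv.Perm.mul_apply]
        exact ihu (v z)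
      | inv u hu ihu =>
        intro z
        have := ihu (u⁻¹ z)
        rw [show u (u⁻¹ z) = z from Equiv.apply_symm_apply u z] at this
        exact this.symm
    rw [Function.Surjective] at hproper
    push_neg at hproper
    obtain ⟨z₀, hz₀⟩ := hproper
    have hz₀S : z₀ ∉ S := fun ⟨a, ha⟩ => hz₀ a ha
    obtain ⟨g, hg, hgx⟩ := hInd' (ι x) z₀
    exact hz₀S (hgx ▸ (hSinv g hg (ι x)).1 ⟨x, rfl⟩)
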